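/- arXiv:2209.12679 — 2 statements merged into one kernel-verified Lean document; each statement's English description precedes it below -/
import Mathlib

section
/- Let X₁, X₂ and Y be Banach spaces, X := X₁ × X₂ with the maximum norm, G ⊆ X open, and f : G → Y an arbitrary mapping. Suppose L(X₁,Y) is separable. Then there exists a σ-upper porous set A ⊆ G such that for all x ∈ G \ A: if f is Lipschitz at x and both partial Fréchet derivatives of f exist at x, then f is Fréchet differentiable at x. -/
open Metric Set Topology

/-- `A` is (upper) porous at `x`. -/
def PorousAt {Z : Type*} [MetricSpace Z] (A : Set Z) (x : Z) : Prop :=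
  ∃ c > (0 : ℝ), ∀ δ > (0 : ℝ), ∃ t, t ∈ Metric.ball x δ ∧ t ≠ x ∧
    Metric.ball t (c * dist t x) ∩ A = ∅

/-- `A` is (upper) porous: porous at each of its points. -/
def Porous {Z : Type*} [MetricSpace Z] (A : Set Z) : Prop :=
  ∀ x ∈ A, PorousAt A x

/-- `A` is σ-(upper) porous: a countable union of porous sets. -/
def SigmaPorous {Z : Type*} [MetricSpace Z] (A : Set Z) : Prop :=
  ∃ u : ℕ → Set Z, (∀ n, Porous (u n)) ∧ A = ⋃ n, u n

/-- `f` is Lipschitz at `x`. -/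
def LipschitzAtPt {Z Y : Type*} [NormedAddCommGroup Z] [NormedAddCommGroup Y]
    (f : Z → Y) (x : Z) : Prop :=
  ∃ L : ℝ, ∀ᶠ y in nhds x, ‖f y - f x‖ ≤ L * ‖y - x‖

section Aux

variable {X₁ X₂ Y : Type*} [NormedAddCommGroup X₁] [NormedSpace ℝ X₁]
  [NormedAddCommGroup X₂] [NormedSpace ℝ X₂]
  [NormedAddCommGroup Y] [NormedSpace ℝ Y]

/-- Auxiliary class of points used in the porosity decomposition. -/
def zClass (f : X₁ × X₂ → Y) (G : Set (X₁ × X₂)) (T : X₁ →L[ℝ] Y) (N r ε : ℝ) :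
    Set (X₁ × X₂) :=
  {x | x ∈ G ∧
    (∀ y, dist y x ≤ 2 * r → ‖f y - f x‖ ≤ N * dist y x) ∧
    (∀ h : X₁, ‖h‖ ≤ 2 * r → ‖f (x.1 + h, x.2) - f x - T h‖ ≤ ε / 9 * ‖h‖) ∧
    (∀ δ, 0 < δ → ∃ p : X₁ × X₂, 0 < ‖p‖ ∧ ‖p‖ < δ ∧
      ε * ‖p‖ < ‖f (x.1 + p.1, x.2 + p.2) - f (x.1, x.2 + p.2) - T p.1‖)}

set_option maxHeartbeats 1000000 in
lemma zClass_porous (f : X₁ × X₂ → Y) (G : Set (X₁ × X₂)) (T : X₁ →L[ℝ] Y)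
    {N r ε : ℝ} (hN : 1 ≤ N) (hr : 0 < r) (hε : 0 < ε) (hε1 : ε ≤ 1) :
    Porous (zClass f G T N r ε) := by
  classical
  intro x hx
  obtain ⟨-, -, hTx, hpairs⟩ := hx
  have hN0 : (0:ℝ) < N := lt_of_lt_of_le one_pos hN
  set c : ℝ := ε / (18 * N) with hc
  have hc0 : 0 < c := by positivity
  have hcN : N * c = ε / 18 := by
    rw [hc, mul_div_assoc', div_eq_div_iff (by positivity) (by norm_num)]; ring
  have hc1 : c ≤ 1 / 2 := by
    rw [hc, div_le_div_iff₀ (by positivity) (by norm_num)]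
    nlinarith
  refine ⟨c, hc0, ?_⟩
  intro δ hδ
  obtain ⟨p, hp0, hps, hpR⟩ := hpairs (min δ r) (lt_min hδ hr)
  have hsδ : ‖p‖ < δ := lt_of_lt_of_le hps (min_le_left _ _)
  have hsr : ‖p‖ < r := lt_of_lt_of_le hps (min_le_right _ _)
  have h1s : ‖p.1‖ ≤ ‖p‖ := norm_fst_le p
  have h2s : ‖p.2‖ ≤ ‖p‖ := norm_snd_le p
  -- p.2 ≠ 0
  have hk0 : p.2 ≠ 0 := by
    intro h20
    have hs1 : ‖p‖ = ‖p.1‖ := by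
      rw [Prod.norm_def, h20, norm_zero]
      exact sup_eq_left.mpr (norm_nonneg _)
    have hp1r : ‖p.1‖ ≤ 2 * r := by rw [← hs1]; linarith
    have hb := hTx p.1 hp1r
    rw [h20] at hpR
    simp only [add_zero, Prod.mk.eta] at hpR
    rw [hs1] at hpR
    have hp1pos : 0 < ‖p.1‖ := by rw [← hs1]; exact hp0
    nlinarith
  have hk0' : 0 < ‖p.2‖ := norm_pos_iff.mpr hk0
  -- distance computations for the two candidate hole centers
  have hdt' : dist (x + (((0:X₁), p.2) : X₁ × X₂)) x = ‖p.2‖ := by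
    have : x + (((0:X₁), p.2) : X₁ × X₂) - x = ((0:X₁), p.2) := by abel
    rw [dist_eq_norm, this, Prod.norm_def, norm_zero]
    exact sup_eq_right.mpr (norm_nonneg _)
  have hdt : dist (x + p) x = ‖p‖ := by
    have : x + p - x = p := by abel
    rw [dist_eq_norm, this]
  rcases eq_empty_or_nonempty
      (Metric.ball (x + (((0:X₁), p.2) : X₁ × X₂)) (c * ‖p.2‖) ∩ zClass f G T N r ε) with
    hemp | ⟨z', hz'⟩
  · -- first hole works
    refine ⟨x + ((0:X₁), p.2), ?_, ?_, ?_⟩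
    · rw [mem_ball, hdt']; exact lt_of_le_of_lt h2s hsδ
    · intro h
      exact hk0 (congrArg Prod.snd (add_eq_left.mp h))
    · rw [hdt']; exact hemp
  · -- second hole works
    refine ⟨x + p, ?_, ?_, ?_⟩
    · rw [mem_ball, hdt]; exact hsδ
    · intro h
      have := add_eq_left.mp h
      rw [this, norm_zero] at hp0; exact lt_irrefl _ hp0
    · rw [hdt, eq_empty_iff_forall_notMem]
      rintro z ⟨hzb, hzC⟩
      obtain ⟨-, hzLip, hzT, -⟩ := hzC
      obtain ⟨hz'b, hz'C⟩ := hz'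
      obtain ⟨-, hz'Lip, hz'T, -⟩ := hz'C
      -- coordinate estimates
      have hdz : dist z (x + p) < c * ‖p‖ := mem_ball.mp hzb
      have hdz' : dist z' (x + (((0:X₁), p.2) : X₁ × X₂)) < c * ‖p.2‖ := mem_ball.mp hz'b
      have hxp1 : (x + p).1 = x.1 + p.1 := rfl
      have hxp2 : (x + p).2 = x.2 + p.2 := rfl
      have ha : ‖x.1 + p.1 - z.1‖ ≤ c * ‖p‖ := by
        have h1 : dist z.1 (x.1 + p.1) ≤ dist z (x + p) := by
          rw [Prod.dist_eq]; exact le_sup_left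
        rw [dist_eq_norm] at h1
        calc ‖x.1 + p.1 - z.1‖ = ‖z.1 - (x.1 + p.1)‖ := (norm_sub_rev _ _)
          _ ≤ dist z (x + p) := h1
          _ ≤ c * ‖p‖ := le_of_lt hdz
      have hb : ‖x.2 + p.2 - z.2‖ ≤ c * ‖p‖ := by
        have h1 : dist z.2 (x.2 + p.2) ≤ dist z (x + p) := by
          rw [Prod.dist_eq]; exact le_sup_right
        rw [dist_eq_norm] at h1
        calc ‖x.2 + p.2 - z.2‖ = ‖z.2 - (x.2 + p.2)‖ := (norm_sub_rev _ _)
          _ ≤ dist z (x + p) := h1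
          _ ≤ c * ‖p‖ := le_of_lt hdz
      have ha' : ‖x.1 - z'.1‖ ≤ c * ‖p‖ := by
        have h1 : dist z'.1 (x.1 + 0) ≤ dist z' (x + (((0:X₁), p.2) : X₁ × X₂)) := by
          rw [Prod.dist_eq]; exact le_sup_left
        rw [dist_eq_norm] at h1
        have h2 : c * ‖p.2‖ ≤ c * ‖p‖ := by nlinarith
        calc ‖x.1 - z'.1‖ = ‖z'.1 - (x.1 + 0)‖ := by rw [add_zero, norm_sub_rev]
          _ ≤ dist z' (x + ((0:X₁), p.2)) := h1
          _ ≤ c * ‖p.2‖ := le_of_lt hdz'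
          _ ≤ c * ‖p‖ := h2
      have hb' : ‖x.2 + p.2 - z'.2‖ ≤ c * ‖p‖ := by
        have h1 : dist z'.2 (x.2 + p.2) ≤ dist z' (x + (((0:X₁), p.2) : X₁ × X₂)) := by
          rw [Prod.dist_eq]; exact le_sup_right
        rw [dist_eq_norm] at h1
        have h2 : c * ‖p.2‖ ≤ c * ‖p‖ := by nlinarith
        calc ‖x.2 + p.2 - z'.2‖ = ‖z'.2 - (x.2 + p.2)‖ := (norm_sub_rev _ _)
          _ ≤ dist z' (x + ((0:X₁), p.2)) := h1
          _ ≤ c * ‖p.2‖ := le_of_lt hdz'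
          _ ≤ c * ‖p‖ := h2
      have hcp_half : c * ‖p‖ ≤ 1 / 2 * ‖p‖ := mul_le_mul_of_nonneg_right hc1 (norm_nonneg p)
      have hcs_r : c * ‖p‖ ≤ r := by linarith
      have hcs2r : c * ‖p‖ ≤ 2 * r := by linarith
      have h2cs2r : 2 * (c * ‖p‖) ≤ 2 * r := by linarith
      have h2p2r : 2 * ‖p‖ ≤ 2 * r := by linarith
      have hcp0 : (0:ℝ) ≤ c * ‖p‖ := by positivity
      -- the six error terms
      -- A1
      have hA1 : ‖f (x.1 + p.1, x.2 + p.2) - f (x.1 + p.1, z.2)‖ ≤ 2 * (N * (c * ‖p‖)) := by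
        have d1 : dist ((x.1 + p.1, x.2 + p.2) : X₁ × X₂) z ≤ c * ‖p‖ := by
          rw [Prod.dist_eq]
          refine sup_le ?_ ?_ <;> rw [dist_eq_norm]
          · exact ha
          · exact hb
        have d2 : dist ((x.1 + p.1, z.2) : X₁ × X₂) z ≤ c * ‖p‖ := by
          rw [Prod.dist_eq]
          refine sup_le ?_ ?_ <;> rw [dist_eq_norm]
          · exact ha
          · simpa using hcp0
        have e1 := hzLip (x.1 + p.1, x.2 + p.2) (le_trans d1 hcs2r)
        have e2 := hzLip (x.1 + p.1, z.2) (le_trans d2 hcs2r)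
        calc ‖f (x.1 + p.1, x.2 + p.2) - f (x.1 + p.1, z.2)‖
            ≤ ‖f (x.1 + p.1, x.2 + p.2) - f z‖ + ‖f (x.1 + p.1, z.2) - f z‖ := by
              rw [← norm_neg (f (x.1 + p.1, z.2) - f z)]
              refine le_trans (le_of_eq ?_) (norm_add_le _ _)
              abel_nf
          _ ≤ N * dist ((x.1 + p.1, x.2 + p.2) : X₁ × X₂) z
              + N * dist ((x.1 + p.1, z.2) : X₁ × X₂) z := add_le_add e1 e2
          _ ≤ N * (c * ‖p‖) + N * (c * ‖p‖) :=
              add_le_add (mul_le_mul_of_nonneg_left d1 hN0.le)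
                (mul_le_mul_of_nonneg_left d2 hN0.le)
          _ = 2 * (N * (c * ‖p‖)) := by ring
      -- A2
      have hA2 : ‖f (x.1 + p.1, z.2) - f z - T (x.1 + p.1 - z.1)‖ ≤ ε / 9 * (c * ‖p‖) := by
        have e1 : z.1 + (x.1 + p.1 - z.1) = x.1 + p.1 := by abel
        have := hzT (x.1 + p.1 - z.1) (le_trans ha hcs2r)
        rw [e1] at this
        exact le_trans this (mul_le_mul_of_nonneg_left ha (by positivity))
      -- A3
      have hA3 : ‖f z - f (z.1, z'.2)‖ ≤ N * (2 * (c * ‖p‖)) := by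
        have d1 : dist ((z.1, z'.2) : X₁ × X₂) z ≤ 2 * (c * ‖p‖) := by
          rw [Prod.dist_eq]
          refine sup_le ?_ ?_ <;> rw [dist_eq_norm]
          · simpa using by linarith
          · have : z'.2 - z.2 = (x.2 + p.2 - z.2) - (x.2 + p.2 - z'.2) := by abel
            rw [this]
            exact le_trans (norm_sub_le _ _) (by linarith)
        have e1 := hzLip (z.1, z'.2) (le_trans d1 h2cs2r)
        rw [← norm_neg (f z - f (z.1, z'.2))]
        refine le_trans (le_of_eq (by abel_nf)) (le_trans e1 ?_)
        exact mul_le_mul_of_nonneg_left d1 hN0.le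
      -- A4
      have hA4 : ‖f (z.1, z'.2) - f z' - T (z.1 - z'.1)‖ ≤ ε / 9 * (2 * ‖p‖) := by
        have e0 : ‖z.1 - z'.1‖ ≤ 2 * ‖p‖ := by
          have : z.1 - z'.1 = p.1 - (x.1 + p.1 - z.1) + (x.1 - z'.1) := by abel
          rw [this]
          refine le_trans (norm_add_le _ _) ?_
          refine le_trans (add_le_add_left (norm_sub_le _ _) _) ?_
          linarith
        have e1 : z'.1 + (z.1 - z'.1) = z.1 := by abel
        have := hz'T (z.1 - z'.1) (le_trans e0 h2p2r)
        rw [e1] at this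
        exact le_trans this (mul_le_mul_of_nonneg_left e0 (by positivity))
      -- A5
      have hA5 : ‖f (x.1, z'.2) - f z' - T (x.1 - z'.1)‖ ≤ ε / 9 * (c * ‖p‖) := by
        have e1 : z'.1 + (x.1 - z'.1) = x.1 := by abel
        have := hz'T (x.1 - z'.1) (le_trans ha' hcs2r)
        rw [e1] at this
        exact le_trans this (mul_le_mul_of_nonneg_left ha' (by positivity))
      -- A6
      have hA6 : ‖f (x.1, z'.2) - f (x.1, x.2 + p.2)‖ ≤ 2 * (N * (c * ‖p‖)) := by
        have d1 : dist ((x.1, z'.2) : X₁ × X₂) z' ≤ c * ‖p‖ := by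
          rw [Prod.dist_eq]
          refine sup_le ?_ ?_ <;> rw [dist_eq_norm]
          · exact ha'
          · simpa using hcp0
        have d2 : dist ((x.1, x.2 + p.2) : X₁ × X₂) z' ≤ c * ‖p‖ := by
          rw [Prod.dist_eq]
          refine sup_le ?_ ?_ <;> rw [dist_eq_norm]
          · exact ha'
          · exact hb'
        have e1 := hz'Lip (x.1, z'.2) (le_trans d1 hcs2r)
        have e2 := hz'Lip (x.1, x.2 + p.2) (le_trans d2 hcs2r)
        calc ‖f (x.1, z'.2) - f (x.1, x.2 + p.2)‖
            ≤ ‖f (x.1, z'.2) - f z'‖ + ‖f (x.1, x.2 + p.2) - f z'‖ := by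
              rw [← norm_neg (f (x.1, x.2 + p.2) - f z')]
              refine le_trans (le_of_eq ?_) (norm_add_le _ _)
              abel_nf
          _ ≤ N * dist ((x.1, z'.2) : X₁ × X₂) z' + N * dist ((x.1, x.2 + p.2) : X₁ × X₂) z' :=
              add_le_add e1 e2
          _ ≤ N * (c * ‖p‖) + N * (c * ‖p‖) :=
              add_le_add (mul_le_mul_of_nonneg_left d1 hN0.le)
                (mul_le_mul_of_nonneg_left d2 hN0.le)
          _ = 2 * (N * (c * ‖p‖)) := by ring
      -- assemble
      have key : f (x.1 + p.1, x.2 + p.2) - f (x.1, x.2 + p.2) - T p.1 =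
          (f (x.1 + p.1, x.2 + p.2) - f (x.1 + p.1, z.2))
          + (f (x.1 + p.1, z.2) - f z - T (x.1 + p.1 - z.1))
          + (f z - f (z.1, z'.2))
          + (f (z.1, z'.2) - f z' - T (z.1 - z'.1))
          - (f (x.1, z'.2) - f z' - T (x.1 - z'.1))
          + (f (x.1, z'.2) - f (x.1, x.2 + p.2)) := by
        have hTp : T p.1 = T (x.1 + p.1 - z.1) + T (z.1 - z'.1) - T (x.1 - z'.1) := by
          rw [← map_add, ← map_sub]
          congr 1
          abel
        rw [hTp]
        abel
      have hle : ‖f (x.1 + p.1, x.2 + p.2) - f (x.1, x.2 + p.2) - T p.1‖ ≤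
          2 * (N * (c * ‖p‖)) + ε / 9 * (c * ‖p‖) + N * (2 * (c * ‖p‖))
          + ε / 9 * (2 * ‖p‖) + ε / 9 * (c * ‖p‖) + 2 * (N * (c * ‖p‖)) := by
        rw [key]
        refine le_trans (norm_add_le _ _) ?_
        refine add_le_add ?_ hA6
        refine le_trans (norm_sub_le _ _) ?_
        refine add_le_add ?_ hA5
        refine le_trans (norm_add_le _ _) ?_
        refine add_le_add ?_ hA4
        refine le_trans (norm_add_le _ _) ?_
        refine add_le_add ?_ hA3
        refine le_trans (norm_add_le _ _) ?_
        exact add_le_add hA1 hA2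
      -- contradiction: RHS < ε * ‖p‖
      have hNc' : N * (c * ‖p‖) = ε / 18 * ‖p‖ := by
        rw [← mul_assoc, hcN]
      have hhalf : ε / 9 * (c * ‖p‖) ≤ ε / 18 * ‖p‖ := by
        refine le_trans (mul_le_mul_of_nonneg_left hcp_half (by positivity)) (le_of_eq ?_)
        ring
      have hepos : 0 < ε * ‖p‖ := mul_pos hε hp0
      linarith

set_option maxHeartbeats 1000000 in
lemma zClass_coverage (f : X₁ × X₂ → Y) (G : Set (X₁ × X₂))
    (useq : ℕ → (X₁ →L[ℝ] Y)) (hu : DenseRange useq)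
    {x : X₁ × X₂} (hxG : x ∈ G) (hLip : LipschitzAtPt f x)
    (h1 : DifferentiableAt ℝ (fun t : X₁ => f (t, x.2)) x.1)
    (h2 : DifferentiableAt ℝ (fun t : X₂ => f (x.1, t)) x.2)
    (hnd : ¬ DifferentiableAt ℝ f x) :
    ∃ i n m j : ℕ, x ∈ zClass f G (useq i) ((n : ℝ) + 1)
      (1 / ((m : ℝ) + 1)) (1 / ((j : ℝ) + 1)) := by
  classical
  obtain ⟨L, hL⟩ := hLip
  rw [Metric.eventually_nhds_iff] at hL
  obtain ⟨ρ₁, hρ₁, hL⟩ := hL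
  set U := fderiv ℝ (fun t : X₁ => f (t, x.2)) x.1 with hU
  set V := fderiv ℝ (fun t : X₂ => f (x.1, t)) x.2 with hV
  have hUd : HasFDerivAt (fun t : X₁ => f (t, x.2)) U x.1 := h1.hasFDerivAt
  have hVd : HasFDerivAt (fun t : X₂ => f (x.1, t)) V x.2 := h2.hasFDerivAt
  -- non-differentiability quantification
  have hD : ¬ HasFDerivAt f (U.coprod V) x := fun h => hnd h.differentiableAt
  rw [hasFDerivAt_iff_isLittleO_nhds_zero, Asymptotics.isLittleO_iff] at hD
  push_neg at hD
  obtain ⟨ε₀, hε₀, hfr⟩ := hD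
  -- choose ε = 1/(j+1) < ε₀/2
  obtain ⟨j, hj⟩ := exists_nat_one_div_lt (show (0:ℝ) < ε₀ / 2 by linarith)
  set ε : ℝ := 1 / ((j : ℝ) + 1) with hε
  have hεpos : 0 < ε := by positivity
  -- choose T
  obtain ⟨i, hi⟩ := hu.exists_dist_lt U (show (0:ℝ) < min (ε / 18) (ε₀ / 8) by
    refine lt_min (by positivity) (by linarith))
  set T := useq i with hT
  have hUT : ‖U - T‖ < min (ε / 18) (ε₀ / 8) := by
    rw [← dist_eq_norm]; exact hi
  -- partial derivative estimates
  have hU' := hUd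
  rw [hasFDerivAt_iff_isLittleO_nhds_zero, Asymptotics.isLittleO_iff] at hU'
  have hU2 := hU' (show (0:ℝ) < ε / 18 by positivity)
  rw [Metric.eventually_nhds_iff] at hU2
  obtain ⟨ρ₂, hρ₂, hU2⟩ := hU2
  have hV' := hVd
  rw [hasFDerivAt_iff_isLittleO_nhds_zero, Asymptotics.isLittleO_iff] at hV'
  have hV2 := hV' (show (0:ℝ) < ε₀ / 8 by linarith)
  rw [Metric.eventually_nhds_iff] at hV2
  obtain ⟨ρ₃, hρ₃, hV2⟩ := hV2
  -- choose r = 1/(m+1)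
  obtain ⟨m, hm⟩ := exists_nat_one_div_lt (show (0:ℝ) < min ρ₁ ρ₂ / 2 by positivity)
  set r : ℝ := 1 / ((m : ℝ) + 1) with hr
  have hrpos : 0 < r := by positivity
  have h2rρ₁ : 2 * r < ρ₁ := by
    have := min_le_left ρ₁ ρ₂; rw [hr]; linarith
  have h2rρ₂ : 2 * r < ρ₂ := by
    have := min_le_right ρ₁ ρ₂; rw [hr]; linarith
  -- choose n
  set n : ℕ := ⌈L⌉₊ with hn
  have hLn : L ≤ (n : ℝ) + 1 := le_trans (Nat.le_ceil L) (by linarith)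
  refine ⟨i, n, m, j, hxG, ?_, ?_, ?_⟩
  · -- Lipschitz condition
    intro y hy
    have := hL (show dist y x < ρ₁ by linarith)
    refine le_trans this ?_
    rw [← dist_eq_norm]
    exact mul_le_mul_of_nonneg_right hLn dist_nonneg
  · -- partial approximation by T
    intro h hh
    have hd : dist h 0 < ρ₂ := by rw [dist_zero_right]; linarith
    have e1 := hU2 hd
    simp only [Prod.mk.eta] at e1
    have e2 : ‖(U - T) h‖ ≤ ε / 18 * ‖h‖ := by
      refine le_trans ((U - T).le_opNorm h) ?_
      exact mul_le_mul_of_nonneg_right (le_of_lt (lt_of_lt_of_le hUT (min_le_left _ _)))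
        (norm_nonneg h)
    have hkey : f (x.1 + h, x.2) - f x - T h =
        ((fun t : X₁ => f (t, x.2)) (x.1 + h) - (fun t : X₁ => f (t, x.2)) x.1 - U h)
        + (U - T) h := by
      simp only [ContinuousLinearMap.sub_apply, Prod.mk.eta]
      abel
    rw [hkey]
    refine le_trans (norm_add_le _ _) ?_
    have : ε / 18 * ‖h‖ + ε / 18 * ‖h‖ = ε / 9 * ‖h‖ := by ring
    rw [← this]
    exact add_le_add e1 e2
  · -- bad pairs at all scales
    intro δ hδ
    have hσ : (0:ℝ) < min δ ρ₃ := lt_min hδ hρ₃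
    have hev : ∀ᶠ q in nhds (0 : X₁ × X₂), dist q 0 < min δ ρ₃ :=
      Metric.eventually_nhds_iff.mpr ⟨min δ ρ₃, hσ, fun y hy => hy⟩
    obtain ⟨q, hq1, hq2⟩ := (hfr.and_eventually hev).exists
    have hq0 : q ≠ 0 := by
      intro h0
      rw [h0] at hq1
      simp at hq1
    have hqpos : 0 < ‖q‖ := norm_pos_iff.mpr hq0
    have hqδ : ‖q‖ < δ := by
      rw [dist_zero_right] at hq2
      exact lt_of_lt_of_le hq2 (min_le_left _ _)
    have hqρ₃ : ‖q‖ < ρ₃ := by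
      rw [dist_zero_right] at hq2
      exact lt_of_lt_of_le hq2 (min_le_right _ _)
    refine ⟨q, hqpos, hqδ, ?_⟩
    -- estimate
    have hxq : x + q = (x.1 + q.1, x.2 + q.2) := rfl
    have hq2' : ‖q.2‖ ≤ ‖q‖ := norm_snd_le q
    have hq1' : ‖q.1‖ ≤ ‖q‖ := norm_fst_le q
    have hVest : ‖f (x.1, x.2 + q.2) - f x - V q.2‖ ≤ ε₀ / 8 * ‖q‖ := by
      have hd : dist q.2 0 < ρ₃ := by rw [dist_zero_right]; linarith
      have := hV2 hd
      simp only [Prod.mk.eta] at this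
      refine le_trans this ?_
      exact mul_le_mul_of_nonneg_left hq2' (by linarith)
    have hTest : ‖(U - T) q.1‖ ≤ ε₀ / 8 * ‖q‖ := by
      refine le_trans ((U - T).le_opNorm q.1) ?_
      have h1 : ‖U - T‖ ≤ ε₀ / 8 := le_of_lt (lt_of_lt_of_le hUT (min_le_right _ _))
      nlinarith [norm_nonneg (U - T), norm_nonneg q.1]
    have hbig : ε₀ * ‖q‖ < ‖f (x + q) - f x - (U.coprod V) q‖ := hq1
    have hsplit : f (x + q) - f x - (U.coprod V) q =
        (f (x.1 + q.1, x.2 + q.2) - f (x.1, x.2 + q.2) - T q.1)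
        + (f (x.1, x.2 + q.2) - f x - V q.2) + (T - U) q.1 := by
      rw [hxq, ContinuousLinearMap.coprod_apply, ContinuousLinearMap.sub_apply]
      abel
    have hTU : ‖(T - U) q.1‖ ≤ ε₀ / 8 * ‖q‖ := by
      rw [show T - U = -(U - T) by abel, ContinuousLinearMap.neg_apply, norm_neg]
      exact hTest
    have htri : ‖f (x + q) - f x - (U.coprod V) q‖ ≤
        ‖f (x.1 + q.1, x.2 + q.2) - f (x.1, x.2 + q.2) - T q.1‖
        + ε₀ / 8 * ‖q‖ + ε₀ / 8 * ‖q‖ := by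
      rw [hsplit]
      refine le_trans (norm_add_le _ _) ?_
      refine add_le_add (le_trans (norm_add_le _ _) (add_le_add le_rfl hVest)) hTU
    have hεε₀ : ε ≤ ε₀ / 2 := le_of_lt hj
    nlinarith

end Aux

theorem sigmaPorous_exceptional_set_partial_frechet_lipschitz
    {X₁ X₂ Y : Type*} [NormedAddCommGroup X₁] [NormedSpace ℝ X₁] [CompleteSpace X₁]
    [NormedAddCommGroup X₂] [NormedSpace ℝ X₂] [CompleteSpace X₂]
    [NormedAddCommGroup Y] [NormedSpace ℝ Y] [CompleteSpace Y]
    [TopologicalSpace.SeparableSpace (X₁ →L[ℝ] Y)]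
    (G : Set (X₁ × X₂)) (hG : IsOpen G) (f : X₁ × X₂ → Y) :
    ∃ A : Set (X₁ × X₂), A ⊆ G ∧ SigmaPorous A ∧
      ∀ x ∈ G \ A,
        (LipschitzAtPt f x ∧
         DifferentiableAt ℝ (fun t : X₁ => f (t, x.2)) x.1 ∧
         DifferentiableAt ℝ (fun t : X₂ => f (x.1, t)) x.2) →
        DifferentiableAt ℝ f x := by
    classical
  have hne : Nonempty (X₁ →L[ℝ] Y) := ⟨0⟩
  obtain ⟨useq, hu⟩ := TopologicalSpace.exists_dense_seq (X₁ →L[ℝ] Y)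
  set u : ℕ → Set (X₁ × X₂) := fun q =>
    zClass f G (useq (Denumerable.ofNat (ℕ × ℕ × ℕ × ℕ) q).1)
      (((Denumerable.ofNat (ℕ × ℕ × ℕ × ℕ) q).2.1 : ℝ) + 1)
      (1 / (((Denumerable.ofNat (ℕ × ℕ × ℕ × ℕ) q).2.2.1 : ℝ) + 1))
      (1 / (((Denumerable.ofNat (ℕ × ℕ × ℕ × ℕ) q).2.2.2 : ℝ) + 1)) with hudef
  refine ⟨⋃ q, u q, ?_, ⟨u, ?_, rfl⟩, ?_⟩
  · refine iUnion_subset fun q => ?_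
    intro y hy
    exact hy.1
  · intro q
    refine zClass_porous f G _ ?_ ?_ ?_ ?_
    · have : (0:ℝ) ≤ ((Denumerable.ofNat (ℕ × ℕ × ℕ × ℕ) q).2.1 : ℝ) := Nat.cast_nonneg _
      linarith
    · positivity
    · positivity
    · rw [div_le_one (by positivity)]
      have : (0:ℝ) ≤ ((Denumerable.ofNat (ℕ × ℕ × ℕ × ℕ) q).2.2.2 : ℝ) := Nat.cast_nonneg _
      linarith
  · rintro x ⟨hxG, hxA⟩ ⟨hLip, h1, h2⟩
    by_contra hnd
    obtain ⟨i, n, m, j, hmem⟩ := zClass_coverage f G useq hu hxG hLip h1 h2 hnd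
    apply hxA
    refine mem_iUnion.mpr ⟨Encodable.encode ((i, n, m, j) : ℕ × ℕ × ℕ × ℕ), ?_⟩
    rw [hudef]
    simp only [Denumerable.ofNat_encode]
    exact hmem
end

section
/- Let G ⊆ ℝⁿ be open and f : G → ℝ a Lipschitz function. Then the set of points x ∈ G at which all n partial derivatives of f exist but f is not Fréchet differentiable at x is σ-upper porous (and in particular both meager and Lebesgue null). -/
open Metric Set Topology

namespace SPAux

lemma porous_mono {Z : Type*} [MetricSpace Z] {A B : Set Z} (hB : Porous B) (h : A ⊆ B) :
    Porous A := by
  intro x hx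
  obtain ⟨c, hc, hc2⟩ := hB x (h hx)
  refine ⟨c, hc, fun δ hδ => ?_⟩
  obtain ⟨t, ht1, ht2, ht3⟩ := hc2 δ hδ
  refine ⟨t, ht1, ht2, ?_⟩
  have h4 : Metric.ball t (c * dist t x) ∩ A ⊆ Metric.ball t (c * dist t x) ∩ B :=
    inter_subset_inter (Subset.refl _) h
  rw [ht3] at h4
  exact subset_empty_iff.mp h4

lemma porous_isNowhereDense {Z : Type*} [MetricSpace Z] {A : Set Z} (hA : Porous A) :
    IsNowhereDense A := by
  rw [IsNowhereDense, eq_empty_iff_forall_notMem]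
  intro x₀ hx₀
  obtain ⟨r, hr, hball⟩ := Metric.isOpen_iff.1 isOpen_interior x₀ hx₀
  have hballA : ball x₀ r ⊆ closure A := hball.trans interior_subset
  have hx₀A : x₀ ∈ closure A := hballA (mem_ball_self hr)
  obtain ⟨x, hxA, hxd⟩ := Metric.mem_closure_iff.1 hx₀A (r/3) (by linarith)
  obtain ⟨c, hc, hc2⟩ := hA x hxA
  obtain ⟨t, ht1, ht2, ht3⟩ := hc2 (r / (3 * (1 + c))) (by positivity)
  have hdtx : 0 < dist t x := dist_pos.2 ht2
  have hsub : ball t (c * dist t x) ⊆ ball x₀ r := by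
    intro w hw
    have h1 : dist w t < c * dist t x := mem_ball.1 hw
    have h2 : dist t x < r / (3 * (1 + c)) := mem_ball.1 ht1
    have : dist w x₀ ≤ dist w t + dist t x + dist x x₀ := by
      calc dist w x₀ ≤ dist w x + dist x x₀ := dist_triangle w x x₀
        _ ≤ (dist w t + dist t x) + dist x x₀ := by
            have := dist_triangle w t x; linarith
    have hxx₀ : dist x x₀ < r/3 := by rw [dist_comm]; exact hxd
    have : dist w x₀ < c * dist t x + dist t x + r/3 := by linarith
    have hh : c * dist t x + dist t x = (1 + c) * dist t x := by ring
    have : (1 + c) * dist t x < (1 + c) * (r / (3 * (1 + c))) := by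
      apply mul_lt_mul_of_pos_left h2 (by linarith)
    have heq : (1 + c) * (r / (3 * (1 + c))) = r / 3 := by
      field_simp
    rw [mem_ball]
    linarith [mem_ball.1 hw]
  have htc : t ∈ closure A := (hballA (hsub (mem_ball_self (by positivity))))
  obtain ⟨a, haA, had⟩ := Metric.mem_closure_iff.1 htc (c * dist t x) (by positivity)
  have : a ∈ ball t (c * dist t x) ∩ A := ⟨mem_ball'.2 had, haA⟩
  rw [ht3] at this
  exact this

lemma porous_isMeagre {Z : Type*} [MetricSpace Z] {A : Set Z} (hA : Porous A) : IsMeagre A :=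
  isMeagre_iff_countable_union_isNowhereDense.2
    ⟨{A}, by simpa using porous_isNowhereDense hA, countable_singleton _, by simp⟩

lemma update_eq {n : ℕ} (x : Fin n → ℝ) (i : Fin n) (s : ℝ) :
    Function.update x i (x i + s) = x + s • (Pi.single i 1 : Fin n → ℝ) := by
  funext k
  by_cases h : k = i
  · subst h; simp
  · simp [Function.update_apply, h, Pi.single_apply]

lemma norm_smul_single {n : ℕ} (i : Fin n) (s : ℝ) :
    ‖s • (Pi.single i 1 : Fin n → ℝ)‖ = |s| := by
  rw [norm_smul, Pi.norm_single, norm_one, mul_one, Real.norm_eq_abs]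

lemma differentiableAt_of_regular {n : ℕ} (f : (Fin n → ℝ) → ℝ) (K : NNReal)
    (x : Fin n → ℝ) {r : ℝ} (hr : 0 < r) (hfl : LipschitzOnWith K f (ball x r))
    (d : Fin n → ℝ)
    (hreg : ∀ i : Fin n, ∀ ε > (0:ℝ), ∀ σ > (0:ℝ), ∃ δ > (0:ℝ), ∀ y : Fin n → ℝ, ∀ t : ℝ,
      ‖y - x‖ < δ → t ≠ 0 → |t| < δ → σ * ‖y - x‖ ≤ |t| →
      |f (y + t • (Pi.single i 1 : Fin n → ℝ)) - f y - d i * t| ≤ ε * |t|) :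
    DifferentiableAt ℝ f x := by
  classical
  set L : (Fin n → ℝ) →L[ℝ] ℝ := ∑ i : Fin n, d i • ContinuousLinearMap.proj i with hL
  have hLapp : ∀ h : Fin n → ℝ, L h = ∑ i : Fin n, d i * h i := by
    intro h
    simp [hL, ContinuousLinearMap.sum_apply]
  clear_value L
  suffices hF : HasFDerivAt f L x from hF.differentiableAt
  rw [hasFDerivAt_iff_isLittleO_nhds_zero, Asymptotics.isLittleO_iff]
  intro c hc
  set C : ℝ := ∑ i : Fin n, ((K:ℝ) + |d i| + 1) with hCdef
  have hCnonneg : 0 ≤ C := Finset.sum_nonneg fun i _ => by positivity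
  set c' : ℝ := c / (C + 1) with hc'def
  have hc' : 0 < c' := by positivity
  clear_value c' C
  choose δ hδpos hδ using fun i : Fin n => hreg i c' hc' c' hc'
  obtain ⟨δ₀, hδ₀pos, hδ₀r, hδ₀le⟩ : ∃ δ₀ > 0, δ₀ ≤ r ∧ ∀ i, δ₀ ≤ δ i := by
    rcases isEmpty_or_nonempty (Fin n) with hni | hni
    · exact ⟨r, hr, le_refl r, fun i => isEmptyElim i⟩
    · refine ⟨min r (Finset.univ.inf' Finset.univ_nonempty δ), ?_, min_le_left _ _, ?_⟩
      · exact lt_min hr (by rw [Finset.lt_inf'_iff]; exact fun i _ => hδpos i)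
      · intro i
        exact le_trans (min_le_right _ _) (Finset.inf'_le _ (Finset.mem_univ i))
  rw [Metric.eventually_nhds_iff]
  refine ⟨δ₀, hδ₀pos, fun {h} hdist => ?_⟩
  rw [dist_zero_right] at hdist
  -- the intermediate points
  set w : ℕ → (Fin n → ℝ) := fun j k => if (k : ℕ) < j then x k + h k else x k with hw
  clear_value w
  have hw0 : w 0 = x := by funext k; simp [hw]
  have hwn : w n = x + h := by funext k; simp [hw, k.isLt]
  have hwx : ∀ j : ℕ, ‖w j - x‖ ≤ ‖h‖ := by
    intro j
    rw [pi_norm_le_iff_of_nonneg (norm_nonneg h)]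
    intro k
    simp only [Pi.sub_apply, hw]
    by_cases hk : (k : ℕ) < j
    · simp only [if_pos hk, add_sub_cancel_left]
      exact norm_le_pi_norm h k
    · simp [if_neg hk]
  have hstep : ∀ j : Fin n, w ((j : ℕ) + 1) = w j + h j • (Pi.single j 1 : Fin n → ℝ) := by
    intro j
    funext k
    have hsingle : (Pi.single j (1:ℝ) : Fin n → ℝ) k = if k = j then 1 else 0 :=
      Pi.single_apply j 1 k
    simp only [Pi.add_apply, Pi.smul_apply, smul_eq_mul, hsingle, hw]
    rcases lt_trichotomy (k : ℕ) (j : ℕ) with hlt | heq | hgt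
    · have h1 : (k : ℕ) < (j : ℕ) + 1 := by omega
      have hkj : ¬ (k = j) := fun hc => by subst hc; omega
      rw [if_pos h1, if_pos hlt, if_neg hkj]; ring
    · have hkj : k = j := Fin.ext heq
      subst hkj
      have h1 : (k : ℕ) < (k : ℕ) + 1 := by omega
      have h2 : ¬ ((k:ℕ) < (k:ℕ)) := by omega
      rw [if_pos h1, if_neg h2, if_pos rfl]; ring
    · have h1 : ¬((k : ℕ) < (j : ℕ) + 1) := by omega
      have h2 : ¬ ((k:ℕ) < (j:ℕ)) := by omega
      have hkj : ¬ (k = j) := fun hc => by subst hc; omega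
      rw [if_neg h1, if_neg h2, if_neg hkj]; ring
  have hkey : f (x + h) - f x - L h = ∑ j : Fin n, (f (w ((j:ℕ) + 1)) - f (w j) - d j * h j) := by
    rw [Finset.sum_sub_distrib, hLapp]
    congr 1
    have : ∑ j : Fin n, (f (w ((j:ℕ) + 1)) - f (w (j:ℕ))) =
        ∑ j ∈ Finset.range n, (f (w (j + 1)) - f (w j)) :=
      Fin.sum_univ_eq_sum_range (fun j => f (w (j + 1)) - f (w j)) n
    rw [this, Finset.sum_range_sub (fun j => f (w j)), hw0, hwn]
  have hball : ∀ j : ℕ, w j ∈ ball x r := by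
    intro j
    rw [mem_ball, dist_eq_norm]
    exact lt_of_le_of_lt (hwx j) (lt_of_lt_of_le hdist hδ₀r)
  have hterm : ∀ j : Fin n, |f (w ((j:ℕ) + 1)) - f (w j) - d j * h j|
      ≤ ((K:ℝ) + |d j| + 1) * (c' * ‖h‖) := by
    intro j
    have hKd : (1:ℝ) ≤ (K:ℝ) + |d j| + 1 := by
      have := abs_nonneg (d j); have := NNReal.coe_nonneg K; linarith
    have hhj : |h j| ≤ ‖h‖ := by
      have := norm_le_pi_norm h j; rwa [Real.norm_eq_abs] at this
    by_cases ht0 : h j = 0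
    · have : w ((j:ℕ) + 1) = w j := by rw [hstep j, ht0]; simp
      rw [this, ht0]
      simp only [sub_self, mul_zero, sub_zero, abs_zero]
      positivity
    · by_cases hbig : c' * ‖h‖ ≤ |h j|
      · have hyx : ‖w (j:ℕ) - x‖ < δ j :=
          lt_of_le_of_lt (hwx (j:ℕ)) (lt_of_lt_of_le hdist (hδ₀le j))
        have htd : |h j| < δ j := lt_of_le_of_lt hhj (lt_of_lt_of_le hdist (hδ₀le j))
        have hratio : c' * ‖w (j:ℕ) - x‖ ≤ |h j| :=
          le_trans (mul_le_mul_of_nonneg_left (hwx (j:ℕ)) hc'.le) hbig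
        have hmain := hδ j (w (j:ℕ)) (h j) hyx ht0 htd hratio
        rw [← hstep j] at hmain
        have h2 : c' * |h j| ≤ c' * ‖h‖ := mul_le_mul_of_nonneg_left hhj hc'.le
        have h3 : c' * ‖h‖ ≤ ((K:ℝ) + |d j| + 1) * (c' * ‖h‖) := by
          nlinarith [mul_nonneg hc'.le (norm_nonneg h)]
        linarith
      · push_neg at hbig
        have hlip : |f (w ((j:ℕ) + 1)) - f (w j)| ≤ (K:ℝ) * |h j| := by
          have := hfl.dist_le_mul (w ((j:ℕ)+1)) (hball _) (w (j:ℕ)) (hball _)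
          rw [Real.dist_eq, dist_eq_norm] at this
          have hnorm : ‖w ((j:ℕ) + 1) - w (j:ℕ)‖ = |h j| := by
            rw [hstep j, add_sub_cancel_left, norm_smul_single]
          rwa [hnorm] at this
        have : |f (w ((j:ℕ) + 1)) - f (w j) - d j * h j|
            ≤ |f (w ((j:ℕ) + 1)) - f (w j)| + |d j| * |h j| := by
          have := abs_sub (f (w ((j:ℕ) + 1)) - f (w j)) (d j * h j)
          rw [abs_mul] at this
          exact (abs_sub _ _).trans (by rw [abs_mul])
        have e1 : (K:ℝ) * |h j| ≤ (K:ℝ) * (c' * ‖h‖) :=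
          mul_le_mul_of_nonneg_left hbig.le (NNReal.coe_nonneg K)
        have e2 : |d j| * |h j| ≤ |d j| * (c' * ‖h‖) :=
          mul_le_mul_of_nonneg_left hbig.le (abs_nonneg _)
        have e3 : 0 ≤ c' * ‖h‖ := mul_nonneg hc'.le (norm_nonneg h)
        have expand : (((K:ℝ) + |d j|) + 1) * (c' * ‖h‖)
            = (K:ℝ) * (c' * ‖h‖) + |d j| * (c' * ‖h‖) + c' * ‖h‖ := by ring
        linarith
  calc ‖f (x + h) - f x - L h‖ = |∑ j : Fin n, (f (w ((j:ℕ) + 1)) - f (w j) - d j * h j)| := by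
        rw [hkey, Real.norm_eq_abs]
    _ ≤ ∑ j : Fin n, |f (w ((j:ℕ) + 1)) - f (w j) - d j * h j| := by
        exact Finset.abs_sum_le_sum_abs _ _
    _ ≤ ∑ j : Fin n, ((K:ℝ) + |d j| + 1) * (c' * ‖h‖) := Finset.sum_le_sum fun j _ => hterm j
    _ = C * (c' * ‖h‖) := by rw [← Finset.sum_mul, ← hCdef]
    _ ≤ c * ‖h‖ := by
        rw [hc'def]
        have h1 : C * (c / (C + 1)) ≤ c := by
          rw [mul_div_assoc']
          rw [div_le_iff₀ (by linarith)]
          linarith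
        calc C * (c / (C + 1) * ‖h‖) = (C * (c / (C + 1))) * ‖h‖ := by ring
          _ ≤ c * ‖h‖ := mul_le_mul_of_nonneg_right h1 (norm_nonneg h)
def piece {n : ℕ} (f : (Fin n → ℝ) → ℝ) (G : Set (Fin n → ℝ)) (i : Fin n)
    (q ε σ : ℝ) (m : ℕ) : Set (Fin n → ℝ) :=
  {x | closedBall x (3 / (m + 1)) ⊆ G ∧
    (∀ s : ℝ, |s| ≤ 1 / (m + 1) →
      |f (x + s • (Pi.single i 1 : Fin n → ℝ)) - f x - q * s| ≤ ε / 4 * |s|) ∧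
    (∀ δ > (0:ℝ), ∃ y : Fin n → ℝ, ∃ t : ℝ, ‖y - x‖ < δ ∧ t ≠ 0 ∧ |t| < δ ∧ |t| ≤ 1 / (m + 1) ∧
      σ * ‖y - x‖ ≤ |t| ∧
      ε / 2 * |t| < |f (y + t • (Pi.single i 1 : Fin n → ℝ)) - f y - q * t|)}

lemma norm_smul_single' {n : ℕ} (i : Fin n) (s : ℝ) :
    ‖s • (Pi.single i 1 : Fin n → ℝ)‖ = |s| := by
  rw [norm_smul, Pi.norm_single, norm_one, mul_one, Real.norm_eq_abs]

lemma porous_piece {n : ℕ} (f : (Fin n → ℝ) → ℝ) (G : Set (Fin n → ℝ)) (K : NNReal)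
    (hf : LipschitzOnWith K f G) (i : Fin n) {q ε σ : ℝ} {m : ℕ}
    (hε : 0 < ε) (hσ : 0 < σ) : Porous (piece f G i q ε σ m) := by
  intro x hx
  obtain ⟨hxG, hgood, hbad⟩ := hx
  set M : ℝ := min (ε / (8 * (K:ℝ) + 8)) 1 with hM
  have hMpos : 0 < M := by
    apply lt_min
    · positivity
    · norm_num
  have hM1 : M ≤ 1 := min_le_right _ _
  have hMε : M ≤ ε / (8 * (K:ℝ) + 8) := min_le_left _ _
  refine ⟨M * (σ / (σ + 1)), by positivity, fun δ hδ => ?_⟩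
  obtain ⟨y, t, hyx, ht0, htδ, htm, hσt, hbadineq⟩ := hbad (δ / 2) (by linarith)
  set z : Fin n → ℝ := y + t • (Pi.single i 1 : Fin n → ℝ) with hz
  set ρ : ℝ := M * |t| with hρ
  have ht0' : 0 < |t| := abs_pos.2 ht0
  have hρpos : 0 < ρ := by positivity
  have hρt : ρ ≤ |t| := by
    calc ρ = M * |t| := rfl
      _ ≤ 1 * |t| := mul_le_mul_of_nonneg_right hM1 (abs_nonneg t)
      _ = |t| := one_mul _
  -- the hole misses the piece
  have hole : ball z ρ ∩ piece f G i q ε σ m = ∅ := by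
    rw [eq_empty_iff_forall_notMem]
    rintro u ⟨huz, huG, hugood, -⟩
    have hzu : ‖z - u‖ < ρ := by
      rw [← dist_eq_norm]; rw [mem_ball] at huz; rw [dist_comm]; exact huz
    have hm1 : (0:ℝ) < 1 / (m + 1) := by positivity
    -- all relevant points are in `closedBall u (3/(m+1)) ⊆ G`
    have hzG : z ∈ G := by
      apply huG
      rw [mem_closedBall, dist_eq_norm]
      calc ‖z - u‖ ≤ |t| := le_of_lt (lt_of_lt_of_le hzu hρt)
        _ ≤ 1 / (m + 1) := htm
        _ ≤ 3 / (m + 1) := by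
            apply div_le_div_of_nonneg_right (by norm_num) (by positivity)
    have huinG : u ∈ G := huG (mem_closedBall_self (by positivity))
    have hyG : y ∈ G := by
      apply huG
      rw [mem_closedBall, dist_eq_norm]
      have : y - u = (z - u) - t • (Pi.single i 1 : Fin n → ℝ) := by
        rw [hz]; abel
      rw [this]
      calc ‖(z - u) - t • (Pi.single i 1 : Fin n → ℝ)‖
          ≤ ‖z - u‖ + ‖t • (Pi.single i 1 : Fin n → ℝ)‖ := norm_sub_le _ _
        _ ≤ |t| + |t| := by
            rw [norm_smul_single']
            have := lt_of_lt_of_le hzu hρt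
            linarith
        _ ≤ 1 / (m+1) + 1 / (m+1) := by linarith [htm]
        _ ≤ 3 / (m + 1) := by
            rw [← add_div]
            apply div_le_div_of_nonneg_right (by norm_num) (by positivity)
    have humtG : u + (-t) • (Pi.single i 1 : Fin n → ℝ) ∈ G := by
      apply huG
      rw [mem_closedBall, dist_eq_norm]
      rw [add_sub_cancel_left, norm_smul_single', abs_neg]
      calc |t| ≤ 1 / (m+1) := htm
        _ ≤ 3 / (m + 1) := by
            apply div_le_div_of_nonneg_right (by norm_num) (by positivity)
    -- three estimates
    have e1 : |f z - f u| ≤ (K:ℝ) * ρ := by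
      have := hf.dist_le_mul z hzG u huinG
      rw [Real.dist_eq, dist_eq_norm] at this
      calc |f z - f u| ≤ (K:ℝ) * ‖z - u‖ := this
        _ ≤ (K:ℝ) * ρ := mul_le_mul_of_nonneg_left hzu.le (NNReal.coe_nonneg K)
    have e2 : |f y - f (u + (-t) • (Pi.single i 1 : Fin n → ℝ))| ≤ (K:ℝ) * ρ := by
      have := hf.dist_le_mul y hyG (u + (-t) • (Pi.single i 1 : Fin n → ℝ)) humtG
      rw [Real.dist_eq, dist_eq_norm] at this
      have heq : y - (u + (-t) • (Pi.single i 1 : Fin n → ℝ)) = z - u := by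
        rw [hz, neg_smul]; abel
      rw [heq] at this
      calc |f y - f (u + (-t) • (Pi.single i 1 : Fin n → ℝ))| ≤ (K:ℝ) * ‖z - u‖ := this
        _ ≤ (K:ℝ) * ρ := mul_le_mul_of_nonneg_left hzu.le (NNReal.coe_nonneg K)
    have e3 : |f (u + (-t) • (Pi.single i 1 : Fin n → ℝ)) - f u - q * (-t)| ≤ ε / 4 * |t| := by
      have := hugood (-t) (by rwa [abs_neg])
      rwa [abs_neg] at this
    -- combine
    have hdecomp : f z - f y - q * t =
        (f z - f u) - (f (u + (-t) • (Pi.single i 1 : Fin n → ℝ)) - f u - q * (-t))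
          - (f y - f (u + (-t) • (Pi.single i 1 : Fin n → ℝ))) := by ring
    have hcomb : |f z - f y - q * t| ≤ (K:ℝ) * ρ + ε / 4 * |t| + (K:ℝ) * ρ := by
      rw [hdecomp]
      calc |(f z - f u) - (f (u + (-t) • (Pi.single i 1 : Fin n → ℝ)) - f u - q * (-t))
            - (f y - f (u + (-t) • (Pi.single i 1 : Fin n → ℝ)))|
          ≤ |(f z - f u) - (f (u + (-t) • (Pi.single i 1 : Fin n → ℝ)) - f u - q * (-t))|
            + |f y - f (u + (-t) • (Pi.single i 1 : Fin n → ℝ))| := abs_sub _ _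
        _ ≤ |f z - f u| + |f (u + (-t) • (Pi.single i 1 : Fin n → ℝ)) - f u - q * (-t)|
            + |f y - f (u + (-t) • (Pi.single i 1 : Fin n → ℝ))| := by
            have := abs_sub (f z - f u) (f (u + (-t) • (Pi.single i 1 : Fin n → ℝ)) - f u - q * (-t))
            linarith
        _ ≤ (K:ℝ) * ρ + ε / 4 * |t| + (K:ℝ) * ρ := by linarith
    -- contradiction with badness
    have h2K : 2 * (K:ℝ) * ρ ≤ ε / 4 * |t| := by
      have : 2 * (K:ℝ) * M ≤ ε / 4 := by
        have h8 : (0:ℝ) < 8 * (K:ℝ) + 8 := by positivity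
        have : 2 * (K:ℝ) * (ε / (8 * (K:ℝ) + 8)) ≤ ε / 4 := by
          rw [← mul_div_assoc, div_le_div_iff₀ h8 (by norm_num : (0:ℝ) < 4)]
          nlinarith [NNReal.coe_nonneg K, hε.le]
        nlinarith [NNReal.coe_nonneg K, hMε, hMpos.le]
      calc 2 * (K:ℝ) * ρ = (2 * (K:ℝ) * M) * |t| := by rw [hρ]; ring
        _ ≤ ε / 4 * |t| := mul_le_mul_of_nonneg_right this (abs_nonneg t)
    have : ε / 2 * |t| < ε / 4 * |t| + ε / 4 * |t| := by
      calc ε / 2 * |t| < |f z - f y - q * t| := hbadineq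
        _ ≤ (K:ℝ) * ρ + ε / 4 * |t| + (K:ℝ) * ρ := hcomb
        _ ≤ ε / 4 * |t| + ε / 4 * |t| := by linarith
    linarith
  -- z is a valid porosity witness
  have hzx : z ≠ x := by
    intro hcontra
    have : x ∈ ball z ρ ∩ piece f G i q ε σ m :=
      ⟨by rw [hcontra]; exact mem_ball_self hρpos, hxG, hgood, hbad⟩
    rw [hole] at this
    exact this
  have hzballδ : z ∈ ball x δ := by
    rw [mem_ball, dist_eq_norm]
    calc ‖z - x‖ = ‖(y - x) + t • (Pi.single i 1 : Fin n → ℝ)‖ := by rw [hz]; abel_nf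
      _ ≤ ‖y - x‖ + |t| := by
          have := norm_add_le (y - x) (t • (Pi.single i 1 : Fin n → ℝ))
          rwa [norm_smul_single'] at this
      _ < δ / 2 + δ / 2 := by linarith
      _ = δ := by ring
  refine ⟨z, hzballδ, hzx, ?_⟩
  have hsub : ball z (M * (σ / (σ + 1)) * dist z x) ⊆ ball z ρ := by
    apply ball_subset_ball
    have hdzx : dist z x ≤ ‖y - x‖ + |t| := by
      rw [dist_eq_norm]
      calc ‖z - x‖ = ‖(y - x) + t • (Pi.single i 1 : Fin n → ℝ)‖ := by rw [hz]; abel_nf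
        _ ≤ ‖y - x‖ + |t| := by
            have := norm_add_le (y - x) (t • (Pi.single i 1 : Fin n → ℝ))
            rwa [norm_smul_single'] at this
    have hfrac : σ / (σ + 1) * (‖y - x‖ + |t|) ≤ |t| := by
      rw [div_mul_eq_mul_div, div_le_iff₀ (by linarith)]
      nlinarith [norm_nonneg (y - x)]
    calc M * (σ / (σ + 1)) * dist z x ≤ M * (σ / (σ + 1)) * (‖y - x‖ + |t|) := by
          apply mul_le_mul_of_nonneg_left hdzx (by positivity)
      _ = M * (σ / (σ + 1) * (‖y - x‖ + |t|)) := by ring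
      _ ≤ M * |t| := mul_le_mul_of_nonneg_left hfrac hMpos.le
  rw [eq_empty_iff_forall_notMem]
  intro v hv
  have : v ∈ ball z ρ ∩ piece f G i q ε σ m := ⟨hsub hv.1, hv.2⟩
  rw [hole] at this
  exact this

lemma porous_empty {Z : Type*} [MetricSpace Z] : Porous (∅ : Set Z) := by
  intro x hx
  exact absurd hx (notMem_empty x)

lemma exists_piece {n : ℕ} {G : Set (Fin n → ℝ)} (hG : IsOpen G) {f : (Fin n → ℝ) → ℝ}
    {K : NNReal} (hf : LipschitzOnWith K f G) {x : Fin n → ℝ} (hx : x ∈ G)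
    (hpart : ∀ i : Fin n, ∃ d : ℝ, HasDerivAt (fun t : ℝ => f (Function.update x i t)) d (x i))
    (hnd : ¬ DifferentiableAt ℝ f x) :
    ∃ (i : Fin n) (q ε σ : ℚ) (m : ℕ), 0 < ε ∧ 0 < σ ∧
      x ∈ piece f G i (q:ℝ) (ε:ℝ) (σ:ℝ) m := by
  classical
  choose d hd using hpart
  obtain ⟨r, hr, hrG⟩ : ∃ r > 0, closedBall x r ⊆ G := by
    obtain ⟨r', hr', h⟩ := Metric.isOpen_iff.1 hG x hx
    exact ⟨r'/2, by linarith, (closedBall_subset_ball (by linarith)).trans h⟩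
  have hballG : ball x r ⊆ G := ball_subset_closedBall.trans hrG
  have hlip : LipschitzOnWith K f (ball x r) := hf.mono hballG
  have hnreg : ¬ (∀ i : Fin n, ∀ ε > (0:ℝ), ∀ σ > (0:ℝ), ∃ δ > (0:ℝ), ∀ y : Fin n → ℝ, ∀ t : ℝ,
      ‖y - x‖ < δ → t ≠ 0 → |t| < δ → σ * ‖y - x‖ ≤ |t| →
      |f (y + t • (Pi.single i 1 : Fin n → ℝ)) - f y - d i * t| ≤ ε * |t|) := by
    intro hreg
    exact hnd (differentiableAt_of_regular f K x hr hlip d hreg)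
  push_neg at hnreg
  obtain ⟨i, ε₀, hε₀, σ₀, hσ₀, hbad⟩ := hnreg
  obtain ⟨ε, hε1, hε2⟩ := exists_rat_btwn hε₀
  obtain ⟨σ, hσ1, hσ2⟩ := exists_rat_btwn hσ₀
  obtain ⟨q, hq1, hq2⟩ := exists_rat_btwn (show d i - (ε:ℝ)/8 < d i by linarith)
  have hqd : |(q:ℝ) - d i| ≤ (ε:ℝ)/8 := by
    rw [abs_le]; constructor <;> linarith
  -- transfer the partial derivative to the directional form
  have hder : HasDerivAt (fun s : ℝ => f (x + s • (Pi.single i 1 : Fin n → ℝ))) (d i) 0 := by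
    have h1 : HasDerivAt (fun s : ℝ => x i + s) 1 0 := by
      simpa using (hasDerivAt_id (0:ℝ)).const_add (x i)
    have h2 : HasDerivAt (fun t : ℝ => f (Function.update x i t)) (d i) (x i + 0) := by
      simpa using hd i
    have h3 := HasDerivAt.comp (0:ℝ) h2 h1
    simp only [mul_one] at h3
    have h4 : HasDerivAt (fun s : ℝ => f (Function.update x i (x i + s))) (d i) 0 := by
      exact h3
    have heq : (fun s : ℝ => f (Function.update x i (x i + s)))
        = fun s : ℝ => f (x + s • (Pi.single i 1 : Fin n → ℝ)) := by
      funext s; rw [update_eq]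
    rwa [heq] at h4
  have hlo := hasDerivAt_iff_isLittleO.1 hder
  rw [Asymptotics.isLittleO_iff] at hlo
  have hev := hlo (show (0:ℝ) < (ε:ℝ)/8 by positivity)
  rw [Metric.eventually_nhds_iff] at hev
  obtain ⟨η, hη, hgood0⟩ := hev
  obtain ⟨m, hm⟩ := exists_nat_gt (max (3 / r) (1 / η))
  have hm1 : (0:ℝ) < (m:ℝ) + 1 := by positivity
  have h3m : 3 / ((m:ℝ) + 1) ≤ r := by
    have h3r : 3 / r < (m:ℝ) + 1 :=
      lt_trans (lt_of_le_of_lt (le_max_left _ _) hm) (lt_add_one _)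
    rw [div_le_iff₀ hm1]
    have := (div_lt_iff₀ hr).1 h3r
    nlinarith
  have h1m : 1 / ((m:ℝ) + 1) < η := by
    have h1r : 1 / η < (m:ℝ) + 1 :=
      lt_trans (lt_of_le_of_lt (le_max_right _ _) hm) (lt_add_one _)
    rw [div_lt_iff₀ hm1]
    have := (div_lt_iff₀ hη).1 h1r
    nlinarith
  refine ⟨i, q, ε, σ, m, by exact_mod_cast hε1, by exact_mod_cast hσ1, ?_, ?_, ?_⟩
  · exact (closedBall_subset_closedBall h3m).trans hrG
  · -- goodness
    intro s hs
    have hsη : dist s 0 < η := by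
      rw [Real.dist_eq, sub_zero]
      exact lt_of_le_of_lt hs h1m
    have := hgood0 hsη
    simp only [zero_smul, add_zero, sub_zero, smul_eq_mul, Real.norm_eq_abs] at this
    -- this : |f (x + s • e) - f x - s * d i| ≤ ε/8 * |s|
    have habs : |s * d i - (q:ℝ) * s| ≤ (ε:ℝ)/8 * |s| := by
      have : s * d i - (q:ℝ) * s = (d i - (q:ℝ)) * s := by ring
      rw [this, abs_mul]
      have hdq : |d i - (q:ℝ)| ≤ (ε:ℝ)/8 := by rw [abs_sub_comm]; exact hqd
      exact mul_le_mul_of_nonneg_right hdq (abs_nonneg s)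
    have htri := abs_sub_le (f (x + s • (Pi.single i 1 : Fin n → ℝ)) - f x) (s * d i) ((q:ℝ) * s)
    have : |f (x + s • (Pi.single i 1 : Fin n → ℝ)) - f x - (q:ℝ) * s|
        ≤ (ε:ℝ)/8 * |s| + (ε:ℝ)/8 * |s| := by
      calc |f (x + s • (Pi.single i 1 : Fin n → ℝ)) - f x - (q:ℝ) * s|
          ≤ |f (x + s • (Pi.single i 1 : Fin n → ℝ)) - f x - s * d i| + |s * d i - (q:ℝ) * s| :=
            htri
        _ ≤ (ε:ℝ)/8 * |s| + (ε:ℝ)/8 * |s| := by linarith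
    linarith
  · -- badness
    intro δ hδ
    have hmin : 0 < min δ (1 / ((m:ℝ) + 1)) := lt_min hδ (by positivity)
    obtain ⟨y, t, hyx, ht0, htδ, hσt, hbadt⟩ := hbad (min δ (1 / ((m:ℝ) + 1))) hmin
    refine ⟨y, t, lt_of_lt_of_le hyx (min_le_left _ _), ht0,
      lt_of_lt_of_le htδ (min_le_left _ _), le_of_lt (lt_of_lt_of_le htδ (min_le_right _ _)),
      ?_, ?_⟩
    · exact le_trans (mul_le_mul_of_nonneg_right hσ2.le (norm_nonneg _)) hσt
    · have habs : |(q:ℝ) * t - d i * t| ≤ (ε:ℝ)/8 * |t| := by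
        have heq : (q:ℝ) * t - d i * t = ((q:ℝ) - d i) * t := by ring
        rw [heq, abs_mul]
        exact mul_le_mul_of_nonneg_right hqd (abs_nonneg t)
      have htri := abs_sub_le (f (y + t • (Pi.single i 1 : Fin n → ℝ)) - f y)
        ((q:ℝ) * t) (d i * t)
      have hmul : (ε:ℝ) * |t| ≤ ε₀ * |t| :=
        mul_le_mul_of_nonneg_right hε2.le (abs_nonneg t)
      have hεt : 0 ≤ (ε:ℝ) * |t| := mul_nonneg (by positivity) (abs_nonneg t)
      -- hbadt : ε₀ * |t| < |f (y + t•e) - f y - d i * t|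
      have h1 : |f (y + t • (Pi.single i 1 : Fin n → ℝ)) - f y - d i * t|
          ≤ |f (y + t • (Pi.single i 1 : Fin n → ℝ)) - f y - (q:ℝ) * t| + (ε:ℝ)/8 * |t| := by
        calc |f (y + t • (Pi.single i 1 : Fin n → ℝ)) - f y - d i * t|
            ≤ |f (y + t • (Pi.single i 1 : Fin n → ℝ)) - f y - (q:ℝ) * t|
              + |(q:ℝ) * t - d i * t| := htri
          _ ≤ _ + (ε:ℝ)/8 * |t| := by linarith
      linarith

end SPAux

theorem sigmaPorous_partials_exist_not_differentiable
    (n : ℕ) (G : Set (Fin n → ℝ)) (hG : IsOpen G)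
    (f : (Fin n → ℝ) → ℝ) (K : NNReal) (hf : LipschitzOnWith K f G) :
    SigmaPorous {x ∈ G |
      (∀ i : Fin n, ∃ d : ℝ, HasDerivAt (fun t : ℝ => f (Function.update x i t)) d (x i)) ∧
      ¬ DifferentiableAt ℝ f x} ∧
    IsMeagre {x ∈ G |
      (∀ i : Fin n, ∃ d : ℝ, HasDerivAt (fun t : ℝ => f (Function.update x i t)) d (x i)) ∧
      ¬ DifferentiableAt ℝ f x} ∧
    MeasureTheory.volume {x ∈ G |
      (∀ i : Fin n, ∃ d : ℝ, HasDerivAt (fun t : ℝ => f (Function.update x i t)) d (x i)) ∧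
      ¬ DifferentiableAt ℝ f x} = 0 := by
  classical
  set A := {x ∈ G |
      (∀ i : Fin n, ∃ d : ℝ, HasDerivAt (fun t : ℝ => f (Function.update x i t)) d (x i)) ∧
      ¬ DifferentiableAt ℝ f x} with hA
  set T : Fin n × ℚ × ℚ × ℚ × ℕ → Set (Fin n → ℝ) := fun p =>
    if 0 < p.2.2.1 ∧ 0 < p.2.2.2.1 then
      SPAux.piece f G p.1 (p.2.1 : ℝ) (p.2.2.1 : ℝ) (p.2.2.2.1 : ℝ) p.2.2.2.2 ∩ A else ∅
    with hT
  have hTpor : ∀ p, Porous (T p) := by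
    intro p
    rw [hT]
    dsimp only
    split_ifs with hcond
    · exact SPAux.porous_mono (SPAux.porous_piece f G K hf p.1
        (by exact_mod_cast hcond.1) (by exact_mod_cast hcond.2)) inter_subset_left
    · exact SPAux.porous_empty
  have hTsub : ∀ p, T p ⊆ A := by
    intro p
    rw [hT]
    dsimp only
    split_ifs
    · exact inter_subset_right
    · exact empty_subset _
  have hcover : A = ⋃ p, T p := by
    apply Subset.antisymm
    · intro x hx
      obtain ⟨hxG, hpart, hnd⟩ := hx
      obtain ⟨i, q, ε, σ, m, hε, hσ, hmem⟩ := SPAux.exists_piece hG hf hxG hpart hnd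
      refine mem_iUnion.2 ⟨⟨i, q, ε, σ, m⟩, ?_⟩
      rw [hT]
      dsimp only
      rw [if_pos ⟨hε, hσ⟩]
      exact ⟨hmem, ⟨hxG, hpart, hnd⟩⟩
    · exact iUnion_subset hTsub
  have hσp : SigmaPorous A := by
    refine ⟨fun k => (Encodable.decode (α := Fin n × ℚ × ℚ × ℚ × ℕ) k).elim ∅ T, ?_, ?_⟩
    · intro k
      rcases hdk : Encodable.decode (α := Fin n × ℚ × ℚ × ℚ × ℕ) k with _ | p
      · simpa [hdk] using SPAux.porous_empty
      · simpa [hdk] using hTpor p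
    · rw [hcover]
      apply Subset.antisymm
      · intro w hw
        obtain ⟨p, hp⟩ := mem_iUnion.1 hw
        refine mem_iUnion.2 ⟨Encodable.encode p, ?_⟩
        simp [Encodable.encodek]
        exact hp
      · intro w hw
        obtain ⟨k, hk⟩ := mem_iUnion.1 hw
        rcases hdk : Encodable.decode (α := Fin n × ℚ × ℚ × ℚ × ℕ) k with _ | p
        · rw [hdk] at hk
          exact absurd hk (notMem_empty w)
        · rw [hdk] at hk
          exact mem_iUnion.2 ⟨p, hk⟩
  have hmg : IsMeagre A := by
    obtain ⟨u, hupor, huA⟩ := hσp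
    rw [huA]
    exact isMeagre_iUnion fun k => SPAux.porous_isMeagre (hupor k)
  have hnull : MeasureTheory.volume A = 0 := by
    have hae := hf.ae_differentiableWithinAt_of_mem (μ := MeasureTheory.volume)
    have hsub : A ⊆ {x | ¬ (x ∈ G → DifferentiableWithinAt ℝ f G x)} := by
      intro x hx
      obtain ⟨hxG, -, hnd⟩ := hx
      intro hcon
      exact hnd ((hcon hxG).differentiableAt (hG.mem_nhds hxG))
    exact MeasureTheory.measure_mono_null hsub (MeasureTheory.ae_iff.1 hae)
  exact ⟨hσp, hmg, hnull⟩
end
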